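/- Let G = (V, E) be a finite simple graph and let x¹, x² be two LP-optimal, half-integral points of the vertex-cover LP of G, with integer-coordinate sets I¹ = {v ∈ V : x¹_v ∈ {0,1}} and I² = {v ∈ V : x²_v ∈ {0,1}}. Then there exists an LP-optimal half-integral point x̂ whose set of integer-valued coordinates is exactly I¹ ∪ I², i.e. {v ∈ V : x̂_v ∈ {0,1}} = I¹ ∪ I². (Fact 4.) -/

import Mathlib

def LPFeasible {V : Type*} [Fintype V] (G : SimpleGraph V) (x : V → ℝ) : Prop :=
  (∀ v, 0 ≤ x v ∧ x v ≤ 1) ∧ ∀ u v, G.Adj u v → 1 ≤ x u + x v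

noncomputable def LPValue {V : Type*} [Fintype V] (x : V → ℝ) : ℝ := ∑ v, x v

def LPOptimal {V : Type*} [Fintype V] (G : SimpleGraph V) (x : V → ℝ) : Prop :=
  LPFeasible G x ∧ ∀ y : V → ℝ, LPFeasible G y → LPValue x ≤ LPValue y

def HalfIntegral {V : Type*} (x : V → ℝ) : Prop :=
  ∀ v, x v = 0 ∨ x v = 1/2 ∨ x v = 1

def IsVertexCover {V : Type*} [Fintype V] (G : SimpleGraph V) (C : Finset V) : Prop :=
  ∀ u v, G.Adj u v → u ∈ C ∨ v ∈ C

/-- round (a1+a2)/2 away from 1/2 -/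
noncomputable def zDown (a1 a2 : ℝ) : ℝ :=
  if a1 + a2 < 1 then 0 else if a1 + a2 = 1 then 1/2 else 1

/-- round (a1+a2)/2 toward 1/2 -/
noncomputable def zUp (a1 a2 : ℝ) : ℝ :=
  if a1 + a2 = 0 then 0 else if a1 + a2 = 2 then 1 else 1/2

/-- the combined point: x1's value on the conflict set, zDown elsewhere -/
noncomputable def xH (a1 a2 : ℝ) : ℝ :=
  if a1 + a2 = 1 ∧ a1 ≠ 1/2 then a1 else zDown a1 a2

/-- the complementary point to xH -/
noncomputable def yH (a1 a2 : ℝ) : ℝ :=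
  if a1 + a2 = 1 ∧ a1 ≠ 1/2 then zDown a1 a2 else a1

lemma zDown_bounds (a1 a2 : ℝ) : 0 ≤ zDown a1 a2 ∧ zDown a1 a2 ≤ 1 := by
  unfold zDown; split_ifs <;> norm_num

lemma zUp_bounds (a1 a2 : ℝ) : 0 ≤ zUp a1 a2 ∧ zUp a1 a2 ≤ 1 := by
  unfold zUp; split_ifs <;> norm_num

lemma xH_bounds {a1 a2 : ℝ} (h : 0 ≤ a1 ∧ a1 ≤ 1) : 0 ≤ xH a1 a2 ∧ xH a1 a2 ≤ 1 := by
  unfold xH; split_ifs with hc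
  · exact h
  · exact zDown_bounds a1 a2

lemma yH_bounds {a1 a2 : ℝ} (h : 0 ≤ a1 ∧ a1 ≤ 1) : 0 ≤ yH a1 a2 ∧ yH a1 a2 ≤ 1 := by
  unfold yH; split_ifs with hc
  · exact zDown_bounds a1 a2
  · exact h

lemma z_sum {a1 a2 : ℝ} (ha1 : a1 = 0 ∨ a1 = 1/2 ∨ a1 = 1)
    (ha2 : a2 = 0 ∨ a2 = 1/2 ∨ a2 = 1) :
    zDown a1 a2 + zUp a1 a2 = a1 + a2 := by
  unfold zDown zUp
  rcases ha1 with h|h|h <;> subst h <;> rcases ha2 with h|h|h <;> subst h <;> norm_num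

lemma h_sum (a1 a2 : ℝ) : xH a1 a2 + yH a1 a2 = a1 + zDown a1 a2 := by
  unfold xH yH; split_ifs <;> ring

lemma zDown_edge {a1 b1 a2 b2 : ℝ}
    (ha1 : a1 = 0 ∨ a1 = 1/2 ∨ a1 = 1) (hb1 : b1 = 0 ∨ b1 = 1/2 ∨ b1 = 1)
    (ha2 : a2 = 0 ∨ a2 = 1/2 ∨ a2 = 1) (hb2 : b2 = 0 ∨ b2 = 1/2 ∨ b2 = 1)
    (h1 : 1 ≤ a1 + b1) (h2 : 1 ≤ a2 + b2) :
    1 ≤ zDown a1 a2 + zDown b1 b2 := by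
  unfold zDown
  rcases ha1 with h|h|h <;> subst h <;>
  rcases hb1 with h|h|h <;> subst h <;>
  rcases ha2 with h|h|h <;> subst h <;>
  rcases hb2 with h|h|h <;> subst h <;>
  (revert h1 h2; norm_num)

lemma zUp_edge {a1 b1 a2 b2 : ℝ}
    (ha1 : a1 = 0 ∨ a1 = 1/2 ∨ a1 = 1) (hb1 : b1 = 0 ∨ b1 = 1/2 ∨ b1 = 1)
    (ha2 : a2 = 0 ∨ a2 = 1/2 ∨ a2 = 1) (hb2 : b2 = 0 ∨ b2 = 1/2 ∨ b2 = 1)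
    (h1 : 1 ≤ a1 + b1) (h2 : 1 ≤ a2 + b2) :
    1 ≤ zUp a1 a2 + zUp b1 b2 := by
  unfold zUp
  rcases ha1 with h|h|h <;> subst h <;>
  rcases hb1 with h|h|h <;> subst h <;>
  rcases ha2 with h|h|h <;> subst h <;>
  rcases hb2 with h|h|h <;> subst h <;>
  (revert h1 h2; norm_num)

lemma xH_edge {a1 b1 a2 b2 : ℝ}
    (ha1 : a1 = 0 ∨ a1 = 1/2 ∨ a1 = 1) (hb1 : b1 = 0 ∨ b1 = 1/2 ∨ b1 = 1)
    (ha2 : a2 = 0 ∨ a2 = 1/2 ∨ a2 = 1) (hb2 : b2 = 0 ∨ b2 = 1/2 ∨ b2 = 1)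
    (h1 : 1 ≤ a1 + b1) (h2 : 1 ≤ a2 + b2) :
    1 ≤ xH a1 a2 + xH b1 b2 := by
  unfold xH zDown
  rcases ha1 with h|h|h <;> subst h <;>
  rcases hb1 with h|h|h <;> subst h <;>
  rcases ha2 with h|h|h <;> subst h <;>
  rcases hb2 with h|h|h <;> subst h <;>
  (revert h1 h2; norm_num)

lemma yH_edge {a1 b1 a2 b2 : ℝ}
    (ha1 : a1 = 0 ∨ a1 = 1/2 ∨ a1 = 1) (hb1 : b1 = 0 ∨ b1 = 1/2 ∨ b1 = 1)
    (ha2 : a2 = 0 ∨ a2 = 1/2 ∨ a2 = 1) (hb2 : b2 = 0 ∨ b2 = 1/2 ∨ b2 = 1)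
    (h1 : 1 ≤ a1 + b1) (h2 : 1 ≤ a2 + b2) :
    1 ≤ yH a1 a2 + yH b1 b2 := by
  unfold yH zDown
  rcases ha1 with h|h|h <;> subst h <;>
  rcases hb1 with h|h|h <;> subst h <;>
  rcases ha2 with h|h|h <;> subst h <;>
  rcases hb2 with h|h|h <;> subst h <;>
  (revert h1 h2; norm_num)

lemma xH_half {a1 a2 : ℝ} (ha1 : a1 = 0 ∨ a1 = 1/2 ∨ a1 = 1)
    (ha2 : a2 = 0 ∨ a2 = 1/2 ∨ a2 = 1) :
    xH a1 a2 = 0 ∨ xH a1 a2 = 1/2 ∨ xH a1 a2 = 1 := by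
  unfold xH zDown
  rcases ha1 with h|h|h <;> subst h <;> rcases ha2 with h|h|h <;> subst h <;> norm_num

lemma xH_int_iff {a1 a2 : ℝ} (ha1 : a1 = 0 ∨ a1 = 1/2 ∨ a1 = 1)
    (ha2 : a2 = 0 ∨ a2 = 1/2 ∨ a2 = 1) :
    (xH a1 a2 = 0 ∨ xH a1 a2 = 1) ↔ ((a1 = 0 ∨ a1 = 1) ∨ (a2 = 0 ∨ a2 = 1)) := by
  unfold xH zDown
  rcases ha1 with h|h|h <;> subst h <;> rcases ha2 with h|h|h <;> subst h <;> norm_num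

theorem max_integer_set {V : Type*} [Fintype V] (G : SimpleGraph V)
    (x1 x2 : V → ℝ) (h1 : LPOptimal G x1) (hh1 : HalfIntegral x1)
    (h2 : LPOptimal G x2) (hh2 : HalfIntegral x2) :
    ∃ xhat : V → ℝ, LPOptimal G xhat ∧ HalfIntegral xhat ∧
      {v | xhat v = 0 ∨ xhat v = 1} =
        {v | x1 v = 0 ∨ x1 v = 1} ∪ {v | x2 v = 0 ∨ x2 v = 1} := by
  obtain ⟨⟨hb1, he1⟩, hopt1⟩ := h1
  obtain ⟨⟨hb2, he2⟩, hopt2⟩ := h2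
  -- the four auxiliary points
  have feasD : LPFeasible G (fun v => zDown (x1 v) (x2 v)) :=
    ⟨fun v => zDown_bounds _ _,
     fun u v huv => zDown_edge (hh1 u) (hh1 v) (hh2 u) (hh2 v) (he1 u v huv) (he2 u v huv)⟩
  have feasU : LPFeasible G (fun v => zUp (x1 v) (x2 v)) :=
    ⟨fun v => zUp_bounds _ _,
     fun u v huv => zUp_edge (hh1 u) (hh1 v) (hh2 u) (hh2 v) (he1 u v huv) (he2 u v huv)⟩
  have feasX : LPFeasible G (fun v => xH (x1 v) (x2 v)) :=
    ⟨fun v => xH_bounds (hb1 v),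
     fun u v huv => xH_edge (hh1 u) (hh1 v) (hh2 u) (hh2 v) (he1 u v huv) (he2 u v huv)⟩
  have feasY : LPFeasible G (fun v => yH (x1 v) (x2 v)) :=
    ⟨fun v => yH_bounds (hb1 v),
     fun u v huv => yH_edge (hh1 u) (hh1 v) (hh2 u) (hh2 v) (he1 u v huv) (he2 u v huv)⟩
  have hval2 : LPValue x2 = LPValue x1 :=
    le_antisymm (hopt2 x1 ⟨hb1, he1⟩) (hopt1 x2 ⟨hb2, he2⟩)
  have hsumz : LPValue (fun v => zDown (x1 v) (x2 v)) + LPValue (fun v => zUp (x1 v) (x2 v))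
      = LPValue x1 + LPValue x2 := by
    unfold LPValue
    rw [← Finset.sum_add_distrib, ← Finset.sum_add_distrib]
    exact Finset.sum_congr rfl fun v _ => z_sum (hh1 v) (hh2 v)
  have hDopt : LPValue (fun v => zDown (x1 v) (x2 v)) = LPValue x1 := by
    have h1 := hopt1 _ feasD
    have h2 := hopt1 _ feasU
    linarith [hval2, hsumz]
  have hsumh : LPValue (fun v => xH (x1 v) (x2 v)) + LPValue (fun v => yH (x1 v) (x2 v))
      = LPValue x1 + LPValue (fun v => zDown (x1 v) (x2 v)) := by
    unfold LPValue
    rw [← Finset.sum_add_distrib, ← Finset.sum_add_distrib]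
    exact Finset.sum_congr rfl fun v _ => h_sum (x1 v) (x2 v)
  have hXopt : LPValue (fun v => xH (x1 v) (x2 v)) = LPValue x1 := by
    have h1 := hopt1 _ feasX
    have h2 := hopt1 _ feasY
    linarith [hDopt, hsumh]
  refine ⟨fun v => xH (x1 v) (x2 v), ⟨feasX, fun y hy => hXopt ▸ hopt1 y hy⟩,
    fun v => xH_half (hh1 v) (hh2 v), ?_⟩
  ext v
  simp only [Set.mem_setOf_eq, Set.mem_union]
  exact xH_int_iff (hh1 v) (hh2 v)
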